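/- Fix τ ∈ ℂ with Im τ ≠ 0, let Λ = {m + n·τ : m, n ∈ ℤ}, and let p, q ∈ ℂ with p − q ∉ Λ. Let f, g : ℂ → ℂ be Λ-elliptic functions such that: f is analytic at every z ∉ p + Λ and meromorphicOrderAt f z = −2 for every z ∈ p + Λ; g is analytic at every z ∉ q + Λ and meromorphicOrderAt g z = −2 for every z ∈ q + Λ. Suppose there exist a, b, c, d ∈ ℂ with a·d − b·c ≠ 0 such that f(z)·(c·g(z) + d) = a·g(z) + b for every z ∉ (p + Λ) ∪ (q + Λ). Then 2·(p − q) ∈ Λ. -/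

import Mathlib

-- The order of a meromorphic function at a point, as an element of `ℤ ∪ {∞}`
-- (junk value `0` if the function is not meromorphic at the point).
open Classical in
noncomputable def meromorphicOrderAt' (f : ℂ → ℂ) (x : ℂ) : WithTop ℤ :=
  if h : MeromorphicAt f x then
    ((analyticOrderAt (fun z ↦ (z - x) ^ h.choose • f z) x).map (↑· : ℕ → ℤ)) - h.choose
  else 0

/-- The lattice `Λ = {m + n·τ : m, n ∈ ℤ}` generated by `1` and `τ`. -/
def latticeSet (τ : ℂ) : Set ℂ := {z | ∃ m n : ℤ, z = (m : ℂ) + (n : ℂ) * τ}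

/-- A function `h : ℂ → ℂ` is `Λ`-elliptic (for the lattice generated by `1` and `τ`)
if it is meromorphic on all of `ℂ` and doubly periodic with periods `1` and `τ`. -/
def IsElliptic (τ : ℂ) (h : ℂ → ℂ) : Prop :=
  MeromorphicOn h Set.univ ∧ (∀ z, h (z + 1) = h z) ∧ (∀ z, h (z + τ) = h z)

open Filter Metric Topology

lemma mo_eq (f : ℂ → ℂ) (x : ℂ) : meromorphicOrderAt' f x = meromorphicOrderAt f x := by
  rw [meromorphicOrderAt', meromorphicOrderAt]

section Lattice
variable {τ : ℂ}

lemma lat_zero : (0:ℂ) ∈ latticeSet τ := ⟨0,0, by simp⟩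
lemma lat_one : (1:ℂ) ∈ latticeSet τ := ⟨1,0, by simp⟩
lemma lat_tau : τ ∈ latticeSet τ := ⟨0,1, by simp⟩
lemma lat_add {z w : ℂ} (hz : z ∈ latticeSet τ) (hw : w ∈ latticeSet τ) :
    z + w ∈ latticeSet τ := by
  obtain ⟨m,n,rfl⟩ := hz; obtain ⟨m',n',rfl⟩ := hw
  exact ⟨m+m', n+n', by push_cast; ring⟩
lemma lat_neg {z : ℂ} (hz : z ∈ latticeSet τ) : -z ∈ latticeSet τ := by
  obtain ⟨m,n,rfl⟩ := hz; exact ⟨-m,-n, by push_cast; ring⟩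
lemma lat_sub {z w : ℂ} (hz : z ∈ latticeSet τ) (hw : w ∈ latticeSet τ) :
    z - w ∈ latticeSet τ := by
  rw [sub_eq_add_neg]; exact lat_add hz (lat_neg hw)
lemma lat_neg_iff {z : ℂ} : -z ∈ latticeSet τ ↔ z ∈ latticeSet τ :=
  ⟨fun h => by simpa using lat_neg h, lat_neg⟩
lemma lat_countable : (latticeSet τ).Countable := by
  have : latticeSet τ = Set.range (fun mn : ℤ × ℤ => (mn.1 : ℂ) + (mn.2 : ℂ) * τ) := by
    ext z; constructor
    · rintro ⟨m,n,rfl⟩; exact ⟨(m,n), rfl⟩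
    · rintro ⟨⟨m,n⟩,rfl⟩; exact ⟨m,n,rfl⟩
  rw [this]; exact Set.countable_range _
lemma coset_countable (v : ℂ) : {z : ℂ | z - v ∈ latticeSet τ}.Countable := by
  have : {z : ℂ | z - v ∈ latticeSet τ} = (fun w => w + v) '' latticeSet τ := by
    ext z; constructor
    · intro hz; exact ⟨z - v, hz, by ring⟩
    · rintro ⟨w, hw, rfl⟩; simpa using hw
  rw [this]; exact lat_countable.image _
lemma half_not_lat (hτ : τ.im ≠ 0) : (2⁻¹ : ℂ) ∉ latticeSet τ := by
  rintro ⟨m,n,hmn⟩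
  have him : (0:ℝ) = n * τ.im := by
    have := congrArg Complex.im hmn
    simpa using this
  have hn : (n:ℝ) = 0 := by
    rcases mul_eq_zero.1 him.symm with hh|hh
    · exact hh
    · exact absurd hh hτ
  have hn0 : n = 0 := by exact_mod_cast hn
  subst hn0
  have hm : (2⁻¹:ℂ) = (m:ℂ) := by simpa using hmn
  have hre := congrArg Complex.re hm
  simp at hre
  have h1 : (2*(m:ℝ)) = 1 := by rw [← hre]; norm_num
  have h2 : ((2*m : ℤ):ℝ) = ((1:ℤ):ℝ) := by push_cast; linarith
  have : (2*m : ℤ) = 1 := by exact_mod_cast h2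
  omega
lemma tauhalf_not_lat (hτ : τ.im ≠ 0) : τ/2 ∉ latticeSet τ := by
  rintro ⟨m,n,hmn⟩
  have him : τ.im/2 = n * τ.im := by
    have := congrArg Complex.im hmn
    simpa using this
  have h0 : (2*(n:ℝ) - 1) * τ.im = 0 := by linear_combination (-2:ℝ) * him
  rcases mul_eq_zero.1 h0 with hh|hh
  · have : ((2*n - 1 : ℤ):ℝ) = ((0:ℤ):ℝ) := by push_cast; linarith
    have : (2*n - 1 : ℤ) = 0 := by exact_mod_cast this
    omega
  · exact absurd hh hτ
lemma mixedhalf_not_lat (hτ : τ.im ≠ 0) : τ/2 + 2⁻¹ ∉ latticeSet τ := by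
  rintro ⟨m,n,hmn⟩
  have him : τ.im/2 = n * τ.im := by
    have := congrArg Complex.im hmn
    simpa using this
  have h0 : (2*(n:ℝ) - 1) * τ.im = 0 := by linear_combination (-2:ℝ) * him
  rcases mul_eq_zero.1 h0 with hh|hh
  · have : ((2*n - 1 : ℤ):ℝ) = ((0:ℤ):ℝ) := by push_cast; linarith
    have : (2*n - 1 : ℤ) = 0 := by exact_mod_cast this
    omega
  · exact absurd hh hτ

lemma lat_sep (hτ : τ.im ≠ 0) {w : ℂ} (hw : w ∈ latticeSet τ) (h0 : w ≠ 0) :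
    min 1 |τ.im| ≤ ‖w‖ := by
  obtain ⟨m,n,rfl⟩ := hw
  rcases eq_or_ne n 0 with rfl|hn
  · simp only [Int.cast_zero, zero_mul, add_zero] at h0 ⊢
    refine le_trans (min_le_left _ _) ?_
    have hm : m ≠ 0 := by simpa using h0
    calc (1:ℝ) ≤ |(m:ℝ)| := by exact_mod_cast Int.one_le_abs (by simpa using hm)
    _ = ‖(m:ℂ)‖ := by rw [Complex.norm_intCast]
  · refine le_trans (min_le_right _ _) ?_
    have him : ((m:ℂ) + (n:ℂ) * τ).im = n * τ.im := by simp
    calc |τ.im| ≤ |(n:ℝ)| * |τ.im| := by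
          nlinarith [abs_nonneg τ.im, (by exact_mod_cast Int.one_le_abs hn : (1:ℝ) ≤ |(n:ℝ)|)]
    _ = |((m:ℂ) + (n:ℂ) * τ).im| := by rw [him, abs_mul]
    _ ≤ ‖(m:ℂ) + (n:ℂ) * τ‖ := Complex.abs_im_le_norm _

lemma lat_closed (hτ : τ.im ≠ 0) : IsClosed (latticeSet τ) := by
  set ε := min 1 |τ.im| with hεdef
  have hε : 0 < ε := lt_min one_pos (abs_pos.2 hτ)
  rw [← isOpen_compl_iff, Metric.isOpen_iff]
  intro y hy
  by_cases hex : ∃ w ∈ latticeSet τ, ‖y - w‖ < ε/2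
  · obtain ⟨w, hwl, hww⟩ := hex
    have hyw : y ≠ w := fun h => hy (h ▸ hwl)
    have hpos : 0 < ‖y - w‖ := by
      simpa [sub_ne_zero.2 hyw] using norm_pos_iff.2 (sub_ne_zero.2 hyw)
    refine ⟨min (‖y - w‖) (ε/2 - ‖y - w‖), lt_min hpos (by linarith), ?_⟩
    intro z hz
    simp only [Set.mem_compl_iff]
    intro hzl
    have hzy : dist z y < min (‖y - w‖) (ε/2 - ‖y - w‖) := hz
    have h1 : ‖z - w‖ < ε := by
      have : ‖z - w‖ ≤ ‖z - y‖ + ‖y - w‖ := by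
        simpa using norm_add_le (z - y) (y - w)
      have hzy' : ‖z - y‖ < ε/2 - ‖y - w‖ :=
        lt_of_lt_of_le (by simpa [Complex.dist_eq] using hzy) (min_le_right _ _)
      linarith [hε]
    have hzw : z = w := by
      by_contra hne
      have := lat_sep hτ (lat_sub hzl hwl) (sub_ne_zero.2 hne)
      rw [← hεdef] at this; linarith
    subst hzw
    have hyz : dist z y < ‖y - z‖ := lt_of_lt_of_le hzy (min_le_left _ _)
    rw [dist_comm, Complex.dist_eq] at hyz
    exact absurd hyz (lt_irrefl _)
  · refine ⟨ε/2, by linarith, ?_⟩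
    intro z hz
    simp only [Set.mem_compl_iff]
    intro hzl
    refine hex ⟨z, hzl, ?_⟩
    calc ‖y - z‖ = dist y z := by rw [Complex.dist_eq]
    _ = dist z y := dist_comm _ _
    _ < ε/2 := hz

lemma ev_avoid_mem (hτ : τ.im ≠ 0) {x v : ℂ} (hx : x - v ∈ latticeSet τ) :
    ∀ᶠ z in 𝓝[≠] x, z - v ∉ latticeSet τ := by
  set ε := min 1 |τ.im| with hεdef
  have hε : 0 < ε := lt_min one_pos (abs_pos.2 hτ)
  rw [Filter.Eventually, Metric.mem_nhdsWithin_iff]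
  refine ⟨ε, hε, ?_⟩
  rintro z ⟨hzb, hzne⟩ hzl
  have hne : z - x ≠ 0 := sub_ne_zero.2 (by simpa using hzne)
  have hmem : z - x ∈ latticeSet τ := by
    have := lat_sub hzl hx
    simpa [sub_sub_sub_cancel_right] using this
  have := lat_sep hτ hmem hne
  rw [← hεdef] at this
  have hlt : ‖z - x‖ < ε := by simpa [Complex.dist_eq] using hzb
  linarith

lemma ev_avoid_not_mem (hτ : τ.im ≠ 0) {x v : ℂ} (hx : x - v ∉ latticeSet τ) :
    ∀ᶠ z in 𝓝 x, z - v ∉ latticeSet τ := by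
  have hcl : IsClosed ((fun z => z - v) ⁻¹' latticeSet τ) :=
    (lat_closed hτ).preimage (continuous_id.sub continuous_const)
  have : ((fun z : ℂ => z - v) ⁻¹' latticeSet τ)ᶜ ∈ 𝓝 x :=
    hcl.isOpen_compl.mem_nhds (by simpa using hx)
  filter_upwards [this] with z hz using hz

end Lattice

section Helpers

lemma ev_shift {P : ℂ → Prop} {x s : ℂ} (h : ∀ᶠ w in 𝓝[≠] (x + s), P w) :
    ∀ᶠ z in 𝓝[≠] x, P (z + s) := by
  rw [Filter.Eventually, Metric.mem_nhdsWithin_iff] at h ⊢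
  obtain ⟨ε, hε, hsub⟩ := h
  refine ⟨ε, hε, fun z hz => ?_⟩
  have h1 : z + s ∈ ball (x+s) ε ∩ {(x+s)}ᶜ := by
    constructor
    · simpa [Metric.mem_ball, dist_eq_norm] using hz.1
    · simp only [Set.mem_compl_iff, Set.mem_singleton_iff, add_left_inj]
      simpa using hz.2
  exact hsub h1

lemma ev_shift_left {P : ℂ → Prop} {x s : ℂ} (h : ∀ᶠ w in 𝓝[≠] (s + x), P w) :
    ∀ᶠ z in 𝓝[≠] x, P (s + z) := by
  rw [add_comm] at h
  have := ev_shift h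
  simpa [add_comm] using this

lemma ev_reflect {P : ℂ → Prop} {x c : ℂ} (h : ∀ᶠ w in 𝓝[≠] (c - x), P w) :
    ∀ᶠ z in 𝓝[≠] x, P (c - z) := by
  rw [Filter.Eventually, Metric.mem_nhdsWithin_iff] at h ⊢
  obtain ⟨ε, hε, hsub⟩ := h
  refine ⟨ε, hε, fun z hz => ?_⟩
  have h1 : c - z ∈ ball (c - x) ε ∩ {(c-x)}ᶜ := by
    constructor
    · have hd : dist (c - z) (c - x) = dist z x := dist_sub_left c z x
      simpa [Metric.mem_ball, hd] using hz.1
    · simp only [Set.mem_compl_iff, Set.mem_singleton_iff, sub_right_inj]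
      simpa using hz.2
  exact hsub h1

lemma freq_shift {P : ℂ → Prop} {x s : ℂ} (h : ∃ᶠ z in 𝓝[≠] x, P (z + s)) :
    ∃ᶠ w in 𝓝[≠] (x + s), P w := by
  by_contra hc
  rw [Filter.not_frequently] at hc
  exact h (ev_shift hc)

lemma compl_count_dense {S : Set ℂ} (hS : S.Countable) : Dense Sᶜ :=
  hS.dense_compl ℂ

lemma compl_count_preconn {S : Set ℂ} (hS : S.Countable) : IsPreconnected Sᶜ :=
  (hS.isConnected_compl_of_one_lt_rank
    (by rw [Complex.rank_real_complex]; norm_num)).isPreconnected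

lemma compl_count_nonempty {S : Set ℂ} (hS : S.Countable) : ∃ z, z ∉ S :=
  ((compl_count_dense hS).nonempty).imp (fun _ hz => hz)

lemma freq_not_mem {S : Set ℂ} (hS : S.Countable) (x : ℂ) :
    ∃ᶠ z in 𝓝[≠] x, z ∉ S := by
  rw [Filter.frequently_iff]
  intro U hU
  rw [Metric.mem_nhdsWithin_iff] at hU
  obtain ⟨ε, hε, hsub⟩ := hU
  have hd := compl_count_dense (hS.insert x)
  obtain ⟨z, hz1, hz2⟩ := hd.exists_mem_open Metric.isOpen_ball
    ((Metric.nonempty_ball (x := x)).2 hε)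
  rw [Set.mem_compl_iff, Set.mem_insert_iff, not_or] at hz1
  exact ⟨z, hsub ⟨hz2, hz1.1⟩, hz1.2⟩

lemma per_int {u : ℂ → ℂ} {τ : ℂ} (h1 : ∀ z, u (z + 1) = u z) (h2 : ∀ z, u (z + τ) = u z)
    (m n : ℤ) (z : ℂ) : u (z + ((m:ℂ) + (n:ℂ) * τ)) = u z := by
  have key : ∀ (w : ℂ) (_ : ∀ z, u (z + w) = u z) (k : ℤ) (y : ℂ), u (y + (k:ℂ) * w) = u y := by
    intro w hw k
    induction k using Int.induction_on with
    | zero => simp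
    | succ i ih => intro y
                   push_cast
                   push_cast at ih
                   rw [show y + ((i:ℂ)+1) * w = (y + (i:ℂ)*w) + w by ring, hw]
                   exact ih y
    | pred i ih => intro y
                   have hw' : ∀ z, u (z - w) = u z := fun z => by
                     rw [← hw (z - w), sub_add_cancel]
                   push_cast
                   push_cast at ih
                   rw [show y + (-(i:ℂ)-1) * w = (y + (-(i:ℂ))*w) - w by ring, hw']
                   exact ih y
  have : z + ((m:ℂ) + (n:ℂ) * τ) = (z + (m:ℂ)*1) + (n:ℂ)*τ := by ring
  rw [this, key τ h2, key 1 h1]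

lemma an_shift {u : ℂ → ℂ} {x s : ℂ} (hu : AnalyticAt ℂ u (x + s)) :
    AnalyticAt ℂ (fun z => u (z + s)) x := by
  have h1 : AnalyticAt ℂ (fun z : ℂ => z + s) x := analyticAt_id.add analyticAt_const
  exact (hu.comp_of_eq h1 rfl : AnalyticAt ℂ (u ∘ fun z => z + s) x)

lemma an_shift_left {u : ℂ → ℂ} {x s : ℂ} (hu : AnalyticAt ℂ u (s + x)) :
    AnalyticAt ℂ (fun z => u (s + z)) x := by
  have h1 : AnalyticAt ℂ (fun z : ℂ => s + z) x := analyticAt_const.add analyticAt_id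
  exact (hu.comp_of_eq h1 rfl : AnalyticAt ℂ (u ∘ fun z => s + z) x)

lemma an_shift_sub {u : ℂ → ℂ} {x s : ℂ} (hu : AnalyticAt ℂ u (x - s)) :
    AnalyticAt ℂ (fun z => u (z - s)) x := by
  have h1 : AnalyticAt ℂ (fun z : ℂ => z - s) x := analyticAt_id.sub analyticAt_const
  exact (hu.comp_of_eq h1 rfl : AnalyticAt ℂ (u ∘ fun z => z - s) x)

lemma an_reflect {u : ℂ → ℂ} {x c : ℂ} (hu : AnalyticAt ℂ u (c - x)) :
    AnalyticAt ℂ (fun z => u (c - z)) x := by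
  have h1 : AnalyticAt ℂ (fun z : ℂ => c - z) x := analyticAt_const.sub analyticAt_id
  exact (hu.comp_of_eq h1 rfl : AnalyticAt ℂ (u ∘ fun z => c - z) x)

lemma order_neg_two_absurd {g G : ℂ → ℂ} {x : ℂ} (hm : MeromorphicAt g x)
    (h2 : meromorphicOrderAt g x = ((-2 : ℤ) : WithTop ℤ)) (hG : ContinuousAt G x)
    (hev : ∀ᶠ w in 𝓝[≠] x, g w = G w) : False := by
  rw [meromorphicOrderAt_eq_int_iff hm] at h2
  obtain ⟨H, hHan, hH0, hHev⟩ := h2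
  have key : ∀ᶠ w in 𝓝[≠] x, H w = (w - x)^2 * G w := by
    filter_upwards [hHev, hev, self_mem_nhdsWithin] with w hw1 hw2 hw3
    have hne : w - x ≠ 0 := sub_ne_zero.2 hw3
    rw [hw2] at hw1
    have : (w-x)^2 * G w = (w-x)^2 * ((w - x) ^ (-2:ℤ) • H w) := by rw [← hw1]
    rw [this, smul_eq_mul, show (-2:ℤ) = -(2:ℤ) from rfl, zpow_neg, ← mul_assoc]
    rw [show ((w-x):ℂ)^((2:ℤ)) = (w-x)^(2:ℕ) from zpow_ofNat _ 2]
    rw [mul_inv_cancel₀ (pow_ne_zero 2 hne), one_mul]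
  have t1 : Tendsto H (𝓝[≠] x) (𝓝 (H x)) :=
    (hHan.continuousAt.tendsto).mono_left nhdsWithin_le_nhds
  have t2 : Tendsto (fun w => (w - x)^2 * G w) (𝓝[≠] x) (𝓝 0) := by
    have : ContinuousAt (fun w => (w - x)^2 * G w) x :=
      (((continuous_id.sub continuous_const).pow 2).continuousAt).mul hG
    have h0 : ((x:ℂ) - x)^2 * G x = 0 := by simp
    exact (h0 ▸ this.tendsto).mono_left nhdsWithin_le_nhds
  have t1' : Tendsto H (𝓝[≠] x) (𝓝 0) := t2.congr' (key.mono (fun w hw => hw.symm))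
  exact hH0 (tendsto_nhds_unique t1 t1')

end Helpers

/-- **Key lemma**: an elliptic function whose only poles lie on `c + Λ`, all of order two,
is even about `c`. -/
lemma elliptic_even {τ : ℂ} (hτ : τ.im ≠ 0) (c : ℂ) {h : ℂ → ℂ} (hh : IsElliptic τ h)
    (han : ∀ z, z - c ∉ latticeSet τ → AnalyticAt ℂ h z)
    (hord : ∀ z, z - c ∈ latticeSet τ → meromorphicOrderAt h z = ((-2:ℤ) : WithTop ℤ)) :
    ∀ z, z ∉ latticeSet τ → h (c + z) = h (c - z) := by
  obtain ⟨hmero, hp1, hpτ⟩ := hh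
  have hper : ∀ w ∈ latticeSet τ, ∀ z, h (z + w) = h z := by
    rintro w ⟨m,n,rfl⟩ z; exact per_int hp1 hpτ m n z
  set δ : ℂ → ℂ := fun z => h (c + z) - h (c - z) with hδdef
  -- basic properties of δ
  have hδper : ∀ w ∈ latticeSet τ, ∀ z, δ (z + w) = δ z := by
    intro w hw z
    show h (c + (z + w)) - h (c - (z + w)) = h (c + z) - h (c - z)
    rw [show c + (z + w) = (c + z) + w by ring, hper w hw,
      show c - (z + w) = (c - z) + (-w) by ring, hper _ (lat_neg hw)]
  have hδodd : ∀ z, δ (-z) = - δ z := by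
    intro z
    show h (c + -z) - h (c - -z) = -(h (c + z) - h (c - z))
    rw [show c + -z = c - z by ring, show c - -z = c + z by ring]; ring
  have hδan : ∀ z, z ∉ latticeSet τ → AnalyticAt ℂ δ z := by
    intro z hz
    have h1 : AnalyticAt ℂ h (c + z) := han _ (by simpa using hz)
    have h2 : AnalyticAt ℂ h (c - z) := han _ (by
      intro hc; exact hz (by simpa using lat_neg hc))
    exact (an_shift_left h1).sub (an_reflect h2)
  have hδhalf : δ 2⁻¹ = 0 := by
    show h (c + 2⁻¹) - h (c - 2⁻¹) = 0
    rw [show c + (2:ℂ)⁻¹ = (c - 2⁻¹) + 1 by ring, hp1]; ring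
  have hδtauhalf : δ (τ/2) = 0 := by
    show h (c + τ/2) - h (c - τ/2) = 0
    rw [show c + τ/2 = (c - τ/2) + τ by ring, hpτ]; ring
  have hδmixed : δ (τ/2 + 2⁻¹) = 0 := by
    show h (c + (τ/2 + 2⁻¹)) - h (c - (τ/2 + 2⁻¹)) = 0
    rw [show c + (τ/2 + 2⁻¹) = ((c - (τ/2 + 2⁻¹)) + 1) + τ by ring, hpτ, hp1]; ring
  -- local expression of δ at 0 : z * δ z = K z near 0
  have hmc : MeromorphicAt h c := hmero c (Set.mem_univ c)
  have hordc : meromorphicOrderAt h c = ((-2:ℤ) : WithTop ℤ) := by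
    have := hord c (by simpa using (lat_zero : (0:ℂ) ∈ latticeSet τ))
    exact this
  rw [meromorphicOrderAt_eq_int_iff hmc] at hordc
  obtain ⟨H, hHan, hH0, hHev⟩ := hordc
  have hΦan : AnalyticAt ℂ (fun z => H (c + z) - H (c - z)) 0 := by
    have h1 : AnalyticAt ℂ H (c + 0) := by simpa using hHan
    have h2 : AnalyticAt ℂ H (c - 0) := by simpa using hHan
    exact (an_shift_left h1).sub (an_reflect h2)
  set Φ : ℂ → ℂ := fun z => H (c + z) - H (c - z) with hΦdef
  have hΦ0 : Φ 0 = 0 := by simp [hΦdef]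
  set K : ℂ → ℂ := dslope Φ 0 with hKdef
  have hKan : AnalyticAt ℂ K 0 := by
    obtain ⟨p, hp⟩ := hΦan
    exact (hp.has_fpower_series_dslope_fslope).analyticAt
  have hΦK : ∀ z, Φ z = z * K z := by
    intro z
    have := sub_smul_dslope Φ 0 z
    rw [sub_zero, smul_eq_mul, hΦ0, sub_zero] at this
    exact this.symm
  have hzpow : ∀ w : ℂ, w ^ (-2:ℤ) = (w^2)⁻¹ := by
    intro w
    rw [show (-2:ℤ) = -(2:ℤ) from rfl, zpow_neg,
      show (w:ℂ)^((2:ℤ)) = w^(2:ℕ) from zpow_ofNat _ 2]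
  have E0 : ∀ᶠ z in 𝓝[≠] (0:ℂ), z * δ z = K z := by
    have hHev1 : ∀ᶠ w in 𝓝[≠] (c + (0:ℂ)), h w = (w - c) ^ (-2:ℤ) • H w := by
      rw [add_zero]; exact hHev
    have hHev2 : ∀ᶠ w in 𝓝[≠] (c - (0:ℂ)), h w = (w - c) ^ (-2:ℤ) • H w := by
      rw [sub_zero]; exact hHev
    have ev1 := ev_shift_left hHev1
    have ev2 := ev_reflect hHev2
    filter_upwards [ev1, ev2, self_mem_nhdsWithin] with z h1 h2 hz
    have hz0 : z ≠ 0 := hz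
    have e1 : c + z - c = z := by ring
    have e2 : c - z - c = -z := by ring
    rw [e1] at h1; rw [e2] at h2
    have hδz : δ z = (z^2)⁻¹ * (H (c + z) - H (c - z)) := by
      show h (c + z) - h (c - z) = _
      rw [h1, h2, smul_eq_mul, smul_eq_mul, hzpow, hzpow, neg_sq]; ring
    have : H (c + z) - H (c - z) = z * K z := hΦK z
    rw [hδz, this]
    field_simp
  -- local expression of δ at any lattice point
  have Elat : ∀ l ∈ latticeSet τ, ∀ᶠ z in 𝓝[≠] l, (z - l) * δ z = K (z - l) := by
    intro l hl
    have h0 : ∀ᶠ w in 𝓝[≠] (l + (-l)), w * δ w = K w := by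
      rw [add_neg_cancel]; exact E0
    have := ev_shift h0
    filter_upwards [this] with z hz
    rw [← sub_eq_add_neg] at hz
    have hδz : δ (z - l) = δ z := by
      have h5 := hδper l hl (z - l)
      rw [sub_add_cancel] at h5
      exact h5.symm
    rwa [hδz] at hz
  -- the product P z = δ z * δ (z + 1/2) extends to an entire function
  set Pf : ℂ → ℂ := fun z => δ z * δ (z + 2⁻¹) with hPfdef
  have locrep : ∀ x : ℂ, ∃ G : ℂ → ℂ, AnalyticAt ℂ G x ∧ ∀ᶠ z in 𝓝[≠] x, Pf z = G z := by
    intro x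
    by_cases hx : x ∈ latticeSet τ
    · -- x ∈ Λ
      have hx2 : x + 2⁻¹ ∉ latticeSet τ := by
        intro hc
        exact half_not_lat hτ (by simpa using lat_sub hc hx)
      have hd2an : AnalyticAt ℂ (fun z => δ (z + 2⁻¹)) x := an_shift (hδan _ hx2)
      have hd20 : δ (x + 2⁻¹) = 0 := by
        rw [add_comm, hδper x hx 2⁻¹, hδhalf]
      set K₂ : ℂ → ℂ := dslope (fun z => δ (z + 2⁻¹)) x with hK₂def
      have hK₂an : AnalyticAt ℂ K₂ x := by
        obtain ⟨p, hp⟩ := hd2an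
        exact (hp.has_fpower_series_dslope_fslope).analyticAt
      have hK₂eq : ∀ z, δ (z + 2⁻¹) = (z - x) * K₂ z := by
        intro z
        have := sub_smul_dslope (fun z => δ (z + 2⁻¹)) x z
        rw [smul_eq_mul, hd20, sub_zero] at this
        exact this.symm
      have hKshift : AnalyticAt ℂ (fun z => K (z - x)) x := by
        apply an_shift_sub
        simpa using hKan
      refine ⟨fun z => K (z - x) * K₂ z, hKshift.mul hK₂an, ?_⟩
      filter_upwards [Elat x hx, self_mem_nhdsWithin] with z hz1 hz2
      have hne : z - x ≠ 0 := sub_ne_zero.2 hz2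
      show δ z * δ (z + 2⁻¹) = K (z - x) * K₂ z
      rw [hK₂eq z, ← hz1]; ring
    · by_cases hx2 : x + 2⁻¹ ∈ latticeSet τ
      · -- x + 1/2 ∈ Λ
        have hδanx : AnalyticAt ℂ δ x := hδan x hx
        have hδx0 : δ x = 0 := by
          have e : x = -2⁻¹ + (x + 2⁻¹) := by ring
          rw [e, show -2⁻¹ + (x + 2⁻¹) = (-2⁻¹ : ℂ) + (x + 2⁻¹) from rfl,
            show ((-2⁻¹ : ℂ) + (x + 2⁻¹)) = ((-2⁻¹ : ℂ)) + (x + 2⁻¹) from rfl]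
          rw [hδper _ hx2 (-2⁻¹ : ℂ), hδodd, hδhalf, neg_zero]
        set K₃ : ℂ → ℂ := dslope δ x with hK₃def
        have hK₃an : AnalyticAt ℂ K₃ x := by
          obtain ⟨p, hp⟩ := hδanx
          exact (hp.has_fpower_series_dslope_fslope).analyticAt
        have hK₃eq : ∀ z, δ z = (z - x) * K₃ z := by
          intro z
          have := sub_smul_dslope δ x z
          rw [smul_eq_mul, hδx0, sub_zero] at this
          exact this.symm
        have hEshift : ∀ᶠ z in 𝓝[≠] x, (z - x) * δ (z + 2⁻¹) = K (z - x) := by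
          have h0 := Elat _ hx2
          have := ev_shift (s := 2⁻¹) h0
          filter_upwards [this] with z hz
          have e : z + 2⁻¹ - (x + 2⁻¹) = z - x := by ring
          rwa [e] at hz
        have hKshift : AnalyticAt ℂ (fun z => K (z - x)) x := by
          apply an_shift_sub
          simpa using hKan
        refine ⟨fun z => K₃ z * K (z - x), hK₃an.mul hKshift, ?_⟩
        filter_upwards [hEshift, self_mem_nhdsWithin] with z hz1 hz2
        show δ z * δ (z + 2⁻¹) = K₃ z * K (z - x)
        rw [hK₃eq z, ← hz1]; ring
      · -- generic point
        have h1 : AnalyticAt ℂ δ x := hδan x hx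
        have h2 : AnalyticAt ℂ (fun z => δ (z + 2⁻¹)) x := an_shift (hδan _ hx2)
        exact ⟨Pf, h1.mul h2, Filter.Eventually.of_forall (fun z => rfl)⟩
  -- globalize to an entire function F
  set F : ℂ → ℂ := fun z => limUnder (𝓝[≠] z) Pf with hFdef
  have F_loc : ∀ x (G : ℂ → ℂ), AnalyticAt ℂ G x → (∀ᶠ z in 𝓝[≠] x, Pf z = G z) →
      ∀ᶠ y in 𝓝 x, F y = G y := by
    intro x G hG hev
    have hev' : ∀ᶠ z in 𝓝 x, (z ≠ x → Pf z = G z) := by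
      rw [eventually_nhdsWithin_iff] at hev
      filter_upwards [hev] with z hz hzx
      exact hz hzx
    have H2 := hev'.eventually_nhds
    filter_upwards [H2, hG.eventually_analyticAt] with y hy hGy
    have hPfG : ∀ᶠ z in 𝓝[≠] y, Pf z = G z := by
      rcases eq_or_ne y x with rfl|hyx
      · rw [eventually_nhdsWithin_iff]
        filter_upwards [hy] with z hz hzy
        exact hz hzy
      · have hne : ∀ᶠ z in 𝓝 y, z ≠ x := eventually_ne_nhds hyx
        have := hy.and hne
        rw [eventually_nhdsWithin_iff]
        filter_upwards [this] with z hz _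
        exact hz.1 hz.2
    have ht : Tendsto Pf (𝓝[≠] y) (𝓝 (G y)) := by
      have hGt : Tendsto G (𝓝[≠] y) (𝓝 (G y)) :=
        (hGy.continuousAt.tendsto).mono_left nhdsWithin_le_nhds
      exact hGt.congr' (hPfG.mono (fun z hz => hz.symm))
    exact ht.limUnder_eq
  have F_an : ∀ x, AnalyticAt ℂ F x := by
    intro x
    obtain ⟨G, hG, hev⟩ := locrep x
    have : F =ᶠ[𝓝 x] G := F_loc x G hG hev
    exact hG.congr this.symm
  have F_eq : ∀ x, x ∉ latticeSet τ → x + 2⁻¹ ∉ latticeSet τ → F x = Pf x := by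
    intro x hx hx2
    have h1 : AnalyticAt ℂ Pf x := (hδan x hx).mul (an_shift (hδan _ hx2))
    have := F_loc x Pf h1 (Filter.Eventually.of_forall (fun z => rfl))
    exact this.self_of_nhds
  -- periodicity of Pf and F
  have hPfper1 : ∀ z, Pf (z + 1) = Pf z := by
    intro z
    show δ (z + 1) * δ (z + 1 + 2⁻¹) = δ z * δ (z + 2⁻¹)
    rw [hδper 1 lat_one z, show z + 1 + 2⁻¹ = (z + 2⁻¹) + 1 by ring,
      hδper 1 lat_one (z + 2⁻¹)]
  have hPfperτ : ∀ z, Pf (z + τ) = Pf z := by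
    intro z
    show δ (z + τ) * δ (z + τ + 2⁻¹) = δ z * δ (z + 2⁻¹)
    rw [hδper τ lat_tau z, show z + τ + 2⁻¹ = (z + 2⁻¹) + τ by ring,
      hδper τ lat_tau (z + 2⁻¹)]
  set S : Set ℂ := latticeSet τ ∪ {z | z + 2⁻¹ ∈ latticeSet τ} with hSdef
  have hScount : S.Countable := by
    apply Set.Countable.union lat_countable
    have : {z : ℂ | z + 2⁻¹ ∈ latticeSet τ} = {z : ℂ | z - (-2⁻¹) ∈ latticeSet τ} := by
      ext z; simp [sub_neg_eq_add]
    rw [this]; exact coset_countable _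
  have hSdense : Dense Sᶜ := compl_count_dense hScount
  have hFcont : Continuous F := continuous_iff_continuousAt.2 (fun x => (F_an x).continuousAt)
  have hnotS : ∀ x, x ∉ S → x ∉ latticeSet τ ∧ x + 2⁻¹ ∉ latticeSet τ := by
    intro x hx
    rw [hSdef, Set.mem_union, not_or] at hx
    exact ⟨hx.1, hx.2⟩
  have hSshift : ∀ w ∈ latticeSet τ, ∀ x, x ∉ S → x + w ∉ S := by
    intro w hw x hx
    obtain ⟨h1, h2⟩ := hnotS x hx
    rw [hSdef, Set.mem_union, not_or]
    constructor
    · intro hc; exact h1 (by simpa using lat_sub hc hw)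
    · intro hc
      apply h2
      have h6 : (x + w + 2⁻¹) - w ∈ latticeSet τ := lat_sub hc hw
      have e : x + w + 2⁻¹ - w = x + 2⁻¹ := by ring
      rwa [e] at h6
  have hFper1 : ∀ z, F (z + 1) = F z := by
    have he : (fun z => F (z + 1)) = F := by
      apply Continuous.ext_on hSdense (hFcont.comp (continuous_id.add continuous_const)) hFcont
      intro z hz
      have hz' : z ∉ S := hz
      obtain ⟨h1, h2⟩ := hnotS z hz'
      have hz1 : z + 1 ∉ S := hSshift 1 lat_one z hz'
      obtain ⟨h3, h4⟩ := hnotS _ hz1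
      show F (z + 1) = F z
      rw [F_eq _ h3 h4, F_eq _ h1 h2, hPfper1]
    exact fun z => congrFun he z
  have hFperτ : ∀ z, F (z + τ) = F z := by
    have he : (fun z => F (z + τ)) = F := by
      apply Continuous.ext_on hSdense (hFcont.comp (continuous_id.add continuous_const)) hFcont
      intro z hz
      have hz' : z ∉ S := hz
      obtain ⟨h1, h2⟩ := hnotS z hz'
      have hz1 : z + τ ∉ S := hSshift τ lat_tau z hz'
      obtain ⟨h3, h4⟩ := hnotS _ hz1
      show F (z + τ) = F z
      rw [F_eq _ h3 h4, F_eq _ h1 h2, hPfperτ]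
    exact fun z => congrFun he z
  -- boundedness of F via compact fundamental domain
  have hdecomp : ∀ z : ℂ, ∃ s t : ℝ, z = (s:ℂ) + (t:ℂ) * τ := by
    intro z
    refine ⟨z.re - (z.im / τ.im) * τ.re, z.im / τ.im, ?_⟩
    apply Complex.ext
    · simp
    · simp [div_mul_cancel₀ _ hτ]
  have hbdd : Bornology.IsBounded (Set.range F) := by
    set Dmap : ℝ × ℝ → ℂ := fun st => (st.1 : ℂ) + (st.2 : ℂ) * τ with hDmapdef
    have hDcont : Continuous Dmap := by
      apply Continuous.add
      · exact Complex.continuous_ofReal.comp continuous_fst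
      · exact (Complex.continuous_ofReal.comp continuous_snd).mul continuous_const
    set D : Set ℂ := Dmap '' (Set.Icc (0:ℝ) 1 ×ˢ Set.Icc (0:ℝ) 1) with hDdef
    have hDcomp : IsCompact D := (isCompact_Icc.prod isCompact_Icc).image hDcont
    have hsub : Set.range F ⊆ F '' D := by
      rintro y ⟨z, rfl⟩
      obtain ⟨s, t, rfl⟩ := hdecomp z
      refine ⟨Dmap (Int.fract s, Int.fract t), ?_, ?_⟩
      · exact ⟨(Int.fract s, Int.fract t),
          ⟨⟨Int.fract_nonneg s, (Int.fract_lt_one s).le⟩,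
           ⟨Int.fract_nonneg t, (Int.fract_lt_one t).le⟩⟩, rfl⟩
      · have : (s:ℂ) + (t:ℂ) * τ =
            Dmap (Int.fract s, Int.fract t) + (((⌊s⌋:ℂ)) + ((⌊t⌋:ℂ)) * τ) := by
          rw [hDmapdef]
          simp only [Int.fract]
          push_cast
          ring
        rw [this, per_int hFper1 hFperτ ⌊s⌋ ⌊t⌋]
    exact ((hDcomp.image hFcont).isBounded).subset hsub
  have hFdiff : Differentiable ℂ F := fun x => (F_an x).differentiableAt
  -- Liouville: F is constant, and its value at τ/2 is 0
  have hFconst : ∀ z, F z = F (τ/2) := fun z => hFdiff.apply_eq_apply_of_bounded hbdd z (τ/2)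
  have hFval : F (τ/2) = 0 := by
    have h1 : τ/2 ∉ latticeSet τ := tauhalf_not_lat hτ
    have h2 : τ/2 + 2⁻¹ ∉ latticeSet τ := mixedhalf_not_lat hτ
    rw [F_eq _ h1 h2]
    show δ (τ/2) * δ (τ/2 + 2⁻¹) = 0
    rw [hδtauhalf, hδmixed, mul_zero]
  have hPzero : ∀ z, z ∉ S → δ z * δ (z + 2⁻¹) = 0 := by
    intro z hz
    obtain ⟨h1, h2⟩ := hnotS z hz
    have : Pf z = F z := (F_eq z h1 h2).symm
    rw [hPfdef] at this
    simp only at this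
    rw [this, hFconst z, hFval]
  -- identity theorem
  have hδU : AnalyticOnNhd ℂ δ (latticeSet τ)ᶜ := fun z hz => hδan z hz
  have hpre : IsPreconnected ((latticeSet τ)ᶜ : Set ℂ) := compl_count_preconn lat_countable
  have hfreq : ∃ᶠ z in 𝓝[≠] (τ/2), (δ z = 0 ∨ δ (z + 2⁻¹) = 0) :=
    (freq_not_mem hScount (τ/2)).mono (fun z hz => mul_eq_zero.1 (hPzero z hz))
  have hEqOn : Set.EqOn δ 0 ((latticeSet τ)ᶜ : Set ℂ) := by
    rcases frequently_or_distrib.1 hfreq with hc1|hc2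
    · exact hδU.eqOn_zero_of_preconnected_of_frequently_eq_zero hpre
        (tauhalf_not_lat hτ) hc1
    · have hc2' : ∃ᶠ w in 𝓝[≠] (τ/2 + 2⁻¹), δ w = 0 := freq_shift hc2
      exact hδU.eqOn_zero_of_preconnected_of_frequently_eq_zero hpre
        (mixedhalf_not_lat hτ) hc2'
  intro z hz
  have := hEqOn (hz : z ∈ ((latticeSet τ)ᶜ : Set ℂ))
  have hzero : h (c + z) - h (c - z) = 0 := this
  exact sub_eq_zero.1 hzero

/-- The complex-analytic core of Proposition 3.9: if the degree-two elliptic functions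
with double poles at `p + Λ` and `q + Λ` are related by a Moebius transformation,
then `2(p - q) ∈ Λ`. -/
theorem mobius_relation_implies_two_torsion (τ : ℂ) (hτ : τ.im ≠ 0) (p q : ℂ)
    (hpq : p - q ∉ latticeSet τ)
    (f g : ℂ → ℂ) (hf : IsElliptic τ f) (hg : IsElliptic τ g)
    (hfan : ∀ z : ℂ, z - p ∉ latticeSet τ → AnalyticAt ℂ f z)
    (hford : ∀ z : ℂ, z - p ∈ latticeSet τ →
      meromorphicOrderAt' f z = ((-2 : ℤ) : WithTop ℤ))
    (hgan : ∀ z : ℂ, z - q ∉ latticeSet τ → AnalyticAt ℂ g z)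
    (hgord : ∀ z : ℂ, z - q ∈ latticeSet τ →
      meromorphicOrderAt' g z = ((-2 : ℤ) : WithTop ℤ))
    (hmob : ∃ a b c d : ℂ, a * d - b * c ≠ 0 ∧
      ∀ z : ℂ, z - p ∉ latticeSet τ → z - q ∉ latticeSet τ →
        f z * (c * g z + d) = a * g z + b) :
    2 * (p - q) ∈ latticeSet τ := by
  obtain ⟨a, b, cc, d, hdet, hrel⟩ := hmob
  have hfe : ∀ z, z ∉ latticeSet τ → f (p + z) = f (p - z) :=
    elliptic_even hτ p hf hfan (fun z hz => by rw [← mo_eq]; exact hford z hz)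
  have hge : ∀ z, z ∉ latticeSet τ → g (q + z) = g (q - z) :=
    elliptic_even hτ q hg hgan (fun z hz => by rw [← mo_eq]; exact hgord z hz)
  set S₂ : Set ℂ := {z | z - (q - p) ∈ latticeSet τ} ∪ {z | z - (p - q) ∈ latticeSet τ}
    with hS₂def
  have hS₂count : S₂.Countable := (coset_countable _).union (coset_countable _)
  have hψan : AnalyticOnNhd ℂ (fun z => g (p + z) - g (p - z)) S₂ᶜ := by
    intro z hz
    rw [Set.mem_compl_iff, hS₂def, Set.mem_union, not_or] at hz
    obtain ⟨hz1, hz2⟩ := hz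
    have h1 : AnalyticAt ℂ g (p + z) := by
      apply hgan
      intro hc; apply hz1
      have e : p + z - q = z - (q - p) := by ring
      rw [e] at hc; exact hc
    have h2 : AnalyticAt ℂ g (p - z) := by
      apply hgan
      intro hc; apply hz2
      have := lat_neg hc
      have e : -(p - z - q) = z - (p - q) := by ring
      rw [e] at this; exact this
    exact (an_shift_left h1).sub (an_reflect h2)
  have hψzero : ∀ z, z ∉ latticeSet τ → z ∉ S₂ → cc * f (p + z) - a ≠ 0 →
      g (p + z) = g (p - z) := by
    intro z hz hzS hcf
    rw [hS₂def, Set.mem_union, not_or] at hzS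
    obtain ⟨hw1, hw2⟩ := hzS
    have hz3 : (p + z) - p ∉ latticeSet τ := by
      have e : p + z - p = z := by ring
      rw [e]; exact hz
    have hz4 : (p - z) - p ∉ latticeSet τ := by
      have e : p - z - p = -z := by ring
      rw [e]; intro hc; exact hz (by simpa using lat_neg hc)
    have hz5 : (p + z) - q ∉ latticeSet τ := by
      have e : p + z - q = z - (q - p) := by ring
      rw [e]; exact hw1
    have hz6 : (p - z) - q ∉ latticeSet τ := by
      intro hc; apply hw2
      have := lat_neg hc
      have e : -(p - z - q) = z - (p - q) := by ring
      rw [e] at this; exact this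
    have e₁ := hrel (p + z) hz3 hz5
    have e₂ := hrel (p - z) hz4 hz6
    have hQ : f (p - z) = f (p + z) := (hfe z hz).symm
    rw [hQ] at e₂
    have key : (cc * f (p + z) - a) * (g (p + z) - g (p - z)) = 0 := by
      linear_combination e₁ - e₂
    rcases mul_eq_zero.1 key with hk|hk
    · exact absurd hk hcf
    · exact sub_eq_zero.1 hk
  have hU₂pre : IsPreconnected (S₂ᶜ : Set ℂ) := compl_count_preconn hS₂count
  set C : Set ℂ := latticeSet τ ∪ S₂ with hCdef
  have hCcount : C.Countable := lat_countable.union hS₂count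
  have hψEq : Set.EqOn (fun z => g (p + z) - g (p - z)) 0 S₂ᶜ := by
    by_cases hcc : cc = 0
    · have ha : a ≠ 0 := fun h0 => hdet (by rw [h0, hcc]; ring)
      obtain ⟨z₀, hz₀⟩ := compl_count_nonempty hCcount
      have hz₀U : z₀ ∈ (S₂ᶜ : Set ℂ) := fun hc => hz₀ (Set.mem_union_right _ hc)
      have hfr : ∃ᶠ z in 𝓝[≠] z₀, (fun z => g (p + z) - g (p - z)) z = 0 := by
        refine (freq_not_mem hCcount z₀).mono ?_
        intro z hzC
        have hz1 : z ∉ latticeSet τ := fun hc => hzC (Set.mem_union_left _ hc)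
        have hz2 : z ∉ S₂ := fun hc => hzC (Set.mem_union_right _ hc)
        have hne : cc * f (p + z) - a ≠ 0 := by
          rw [hcc, zero_mul, zero_sub]; exact neg_ne_zero.2 ha
        have := hψzero z hz1 hz2 hne
        show g (p + z) - g (p - z) = 0
        rw [this, sub_self]
      exact hψan.eqOn_zero_of_preconnected_of_frequently_eq_zero hU₂pre hz₀U hfr
    · have hφan : AnalyticOnNhd ℂ (fun z => cc * f (p + z) - a) (latticeSet τ)ᶜ := by
        intro z hz
        have h1 : AnalyticAt ℂ f (p + z) := by
          apply hfan
          have e : p + z - p = z := by ring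
          rw [e]; exact hz
        exact (analyticAt_const.mul (an_shift_left h1)).sub analyticAt_const
      obtain ⟨z₀, hz₀C, hz₀φ⟩ : ∃ z₀, z₀ ∉ C ∧ cc * f (p + z₀) - a ≠ 0 := by
        by_contra hcon
        push_neg at hcon
        obtain ⟨w₀, hw₀⟩ := compl_count_nonempty hCcount
        have hfr : ∃ᶠ z in 𝓝[≠] w₀, (fun z => cc * f (p + z) - a) z = 0 :=
          (freq_not_mem hCcount w₀).mono (fun z hz => hcon z hz)
        have hw₀Λ : w₀ ∈ ((latticeSet τ)ᶜ : Set ℂ) :=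
          fun hc => hw₀ (Set.mem_union_left _ hc)
        have hEq := hφan.eqOn_zero_of_preconnected_of_frequently_eq_zero
          (compl_count_preconn lat_countable) hw₀Λ hfr
        have hmf : MeromorphicAt f p := hf.1 p (Set.mem_univ p)
        have hordp : meromorphicOrderAt f p = ((-2:ℤ) : WithTop ℤ) := by
          have := hford p (by simpa using (lat_zero : (0:ℂ) ∈ latticeSet τ))
          rwa [mo_eq] at this
        have hev : ∀ᶠ w in 𝓝[≠] p, f w = a / cc := by
          have havoid : ∀ᶠ w in 𝓝[≠] p, w - p ∉ latticeSet τ :=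
            ev_avoid_mem hτ (by simpa using (lat_zero : (0:ℂ) ∈ latticeSet τ))
          filter_upwards [havoid] with w hw
          have hwm : (w - p) ∈ ((latticeSet τ)ᶜ : Set ℂ) := hw
          have h7 : cc * f (p + (w - p)) - a = 0 := hEq hwm
          have e : p + (w - p) = w := by ring
          rw [e] at h7
          field_simp
          linear_combination h7
        exact order_neg_two_absurd hmf hordp continuousAt_const hev
      have hz₀U : z₀ ∈ (S₂ᶜ : Set ℂ) := fun hc => hz₀C (Set.mem_union_right _ hc)
      have hz₀Λ : z₀ ∈ ((latticeSet τ)ᶜ : Set ℂ) :=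
        fun hc => hz₀C (Set.mem_union_left _ hc)
      have hφcont : ContinuousAt (fun z => cc * f (p + z) - a) z₀ :=
        (hφan z₀ hz₀Λ).continuousAt
      have hevne : ∀ᶠ z in 𝓝 z₀, cc * f (p + z) - a ≠ 0 := hφcont.eventually_ne hz₀φ
      have hfr : ∃ᶠ z in 𝓝[≠] z₀, (fun z => g (p + z) - g (p - z)) z = 0 := by
        have h1 : ∃ᶠ z in 𝓝[≠] z₀, z ∉ C := freq_not_mem hCcount z₀
        have h2 := h1.and_eventually (hevne.filter_mono nhdsWithin_le_nhds)
        refine h2.mono ?_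
        rintro z ⟨hzC, hzne⟩
        have hz1 : z ∉ latticeSet τ := fun hc => hzC (Set.mem_union_left _ hc)
        have hz2 : z ∉ S₂ := fun hc => hzC (Set.mem_union_right _ hc)
        have := hψzero z hz1 hz2 hzne
        show g (p + z) - g (p - z) = 0
        rw [this, sub_self]
      exact hψan.eqOn_zero_of_preconnected_of_frequently_eq_zero hU₂pre hz₀U hfr
  have hgp : ∀ z, z - (q-p) ∉ latticeSet τ → z - (p-q) ∉ latticeSet τ →
      g (p + z) = g (p - z) := by
    intro z h1 h2
    have hzU : z ∈ (S₂ᶜ : Set ℂ) := by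
      rw [Set.mem_compl_iff, hS₂def, Set.mem_union]
      push_neg
      exact ⟨h1, h2⟩
    have h8 : g (p + z) - g (p - z) = 0 := hψEq hzU
    exact sub_eq_zero.1 h8
  by_contra hs
  have hG₁an : AnalyticAt ℂ (fun w => g (w + 2*(p - q))) q := by
    apply an_shift
    apply hgan
    have e : q + 2*(p-q) - q = 2*(p-q) := by ring
    rw [e]; exact hs
  have hmg : MeromorphicAt g q := hg.1 q (Set.mem_univ q)
  have hordq : meromorphicOrderAt g q = ((-2:ℤ) : WithTop ℤ) := by
    have := hgord q (by simpa using (lat_zero : (0:ℂ) ∈ latticeSet τ))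
    rwa [mo_eq] at this
  have hev : ∀ᶠ w in 𝓝[≠] q, g w = (fun w => g (w + 2*(p-q))) w := by
    have hv1 : ∀ᶠ w in 𝓝[≠] q, w - q ∉ latticeSet τ :=
      ev_avoid_mem hτ (by simpa using (lat_zero : (0:ℂ) ∈ latticeSet τ))
    have hv2 : ∀ᶠ w in 𝓝 q, w - (3*q - 2*p) ∉ latticeSet τ := by
      apply ev_avoid_not_mem hτ
      have e : q - (3*q - 2*p) = 2*(p - q) := by ring
      rw [e]; exact hs
    filter_upwards [hv1, hv2.filter_mono nhdsWithin_le_nhds] with w hw1 hw2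
    have st1 : g (w + 2*(p-q)) = g (2*q - w) := by
      have e1 : w + 2*(p - q) = p + (w + p - 2*q) := by ring
      have e2 : p - (w + p - 2*q) = 2*q - w := by ring
      have c1 : (w + p - 2*q) - (q - p) ∉ latticeSet τ := by
        have e : w + p - 2*q - (q - p) = w - (3*q - 2*p) := by ring
        rw [e]; exact hw2
      have c2 : (w + p - 2*q) - (p - q) ∉ latticeSet τ := by
        have e : w + p - 2*q - (p - q) = w - q := by ring
        rw [e]; exact hw1
      rw [e1, hgp (w + p - 2*q) c1 c2, e2]
    have st2 : g (2*q - w) = g w := by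
      have e1 : 2*q - w = q + (q - w) := by ring
      have e2 : q - (q - w) = w := by ring
      have hnl : q - w ∉ latticeSet τ := by
        intro hc; apply hw1
        have := lat_neg hc
        have e : -(q - w) = w - q := by ring
        rw [e] at this; exact this
      rw [e1, hge (q - w) hnl, e2]
    show g w = g (w + 2*(p-q))
    rw [st1, st2]
  exact order_neg_two_absurd hmg hordq hG₁an.continuousAt hev
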